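/- Let (X, d) be a metric space, D ⊂ X a subset, and for δ > 0 let D_δ be the open δ-neighborhood of D. Suppose (d_i) is a sequence of metrics on X converging uniformly to d on compact subsets of X \ D_δ₁ for every δ₁ > 0, and suppose for every δ > 0 there exists δ₁ > 0 and i₀ such that for all i ≥ i₀, every point of D_{δ₁} is within d_i-distance δ/3 and within d-distance δ/3 of some point of X \ D_{δ₁}. Then for every δ > 0 and i sufficiently large, |d_i(x,y) - d(x,y)| < δ for all x, y ∈ X; in particular (X, d_i) converges to (X, d) in the Gromov-Hausdorff sense. -/
import Mathlib


open Set

/-- A distance function on X: nonnegative, vanishing on the diagonal, symmetric,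
satisfying the triangle inequality. -/
def IsDistFun {X : Type*} (d : X → X → ℝ) : Prop :=
  (∀ x y, 0 ≤ d x y) ∧ (∀ x, d x x = 0) ∧ (∀ x y, d x y = d y x) ∧
  (∀ x y z, d x z ≤ d x y + d y z)

lemma IsDistFun.abs_sub_le {X : Type*} {d : X → X → ℝ} (hd : IsDistFun d)
    (x y x' y' : X) : |d x y - d x' y'| ≤ d x x' + d y y' := by
  obtain ⟨hpos, hzero, hsymm, htri⟩ := hd
  rw [abs_sub_le_iff]
  constructor
  · have h1 : d x y ≤ d x x' + d x' y := htri x x' y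
    have h2 : d x' y ≤ d x' y' + d y' y := htri x' y' y
    have h3 : d y' y = d y y' := hsymm y' y
    linarith
  · have h1 : d x' y' ≤ d x' x + d x y' := htri x' x y'
    have h2 : d x y' ≤ d x y + d y y' := htri x y y'
    have h3 : d x' x = d x x' := hsymm x' x
    linarith

/-- X compact, D ⊆ X, D_δ the open δ-neighborhood of D for the metric d.
If the metrics d_i converge to d uniformly on the complement of every D_δ₁ (a compact
subset of X \ D), and if for every δ > 0 there are δ₁ > 0 and i₀ such that for i ≥ i₀
every point of D_{δ₁} is within d_i-distance δ/3 and within d-distance δ/3 of a point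
of X \ D_{δ₁}, then d_i → d uniformly on X × X: ∀ δ > 0, |d_i(x,y) - d(x,y)| < δ for
all x, y and all large i (whence Gromov-Hausdorff convergence). -/
theorem stmt4 {X : Type*} [TopologicalSpace X] [CompactSpace X] (D : Set X)
    (d : X → X → ℝ) (di : ℕ → X → X → ℝ)
    (hd : IsDistFun d) (hdi : ∀ i, IsDistFun (di i))
    (hunif : ∀ δ₁ > (0:ℝ), ∀ η > (0:ℝ), ∃ N, ∀ i ≥ N, ∀ x y : X,
      x ∉ {z | ∃ w ∈ D, d z w < δ₁} → y ∉ {z | ∃ w ∈ D, d z w < δ₁} →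
      |di i x y - d x y| ≤ η)
    (hnbhd : ∀ δ > (0:ℝ), ∃ δ₁ > (0:ℝ), ∃ i₀, ∀ i ≥ i₀,
      ∀ x ∈ {z | ∃ w ∈ D, d z w < δ₁}, ∃ y, y ∉ {z | ∃ w ∈ D, d z w < δ₁} ∧
        di i x y ≤ δ / 3 ∧ d x y ≤ δ / 3) :
    ∀ δ > (0:ℝ), ∃ N, ∀ i ≥ N, ∀ x y : X, |di i x y - d x y| < δ := by
  intro δ hδ
  obtain ⟨δ₁, hδ₁, i₀, hi₀⟩ := hnbhd (3 * δ / 8) (by linarith)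
  obtain ⟨N₁, hN₁⟩ := hunif δ₁ hδ₁ (δ / 4) (by linarith)
  refine ⟨max i₀ N₁, fun i hi x y => ?_⟩
  have hii₀ : i ≥ i₀ := le_trans (le_max_left _ _) hi
  have hiN₁ : i ≥ N₁ := le_trans (le_max_right _ _) hi
  -- pick replacements
  have key : ∀ z : X, ∃ z', z' ∉ {w | ∃ v ∈ D, d w v < δ₁} ∧
      di i z z' ≤ δ / 8 ∧ d z z' ≤ δ / 8 := by
    intro z
    by_cases hz : z ∈ {w | ∃ v ∈ D, d w v < δ₁}
    · obtain ⟨z', hz', h1, h2⟩ := hi₀ i hii₀ z hz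
      exact ⟨z', hz', by linarith, by linarith⟩
    · exact ⟨z, hz, by rw [(hdi i).2.1]; linarith, by rw [hd.2.1]; linarith⟩
  obtain ⟨x', hx', hdix, hdx⟩ := key x
  obtain ⟨y', hy', hdiy, hdy⟩ := key y
  have h1 : |di i x y - di i x' y'| ≤ di i x x' + di i y y' := (hdi i).abs_sub_le x y x' y'
  have h2 : |d x y - d x' y'| ≤ d x x' + d y y' := hd.abs_sub_le x y x' y'
  have h3 : |di i x' y' - d x' y'| ≤ δ / 4 := hN₁ i hiN₁ x' y' hx' hy'
  calc |di i x y - d x y|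
      ≤ |di i x y - di i x' y'| + |di i x' y' - d x' y'| + |d x' y' - d x y| := by
        have := abs_sub_le (di i x y) (di i x' y') (d x y)
        have h4 : |di i x' y' - d x y| ≤ |di i x' y' - d x' y'| + |d x' y' - d x y| :=
          abs_sub_le _ _ _
        linarith
    _ < δ := by
        rw [abs_sub_comm (d x' y')] at *
        linarith
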